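/- arXiv:2507.21405 — 2 statements merged into one kernel-verified Lean document; each statement's English description precedes it below -/
import Mathlib

section
/- Let f : (ℂⁿ,0) → (ℂⁿ⁺¹,0) be a finite holomorphic map germ. Then mult f = gd(f) if and only if, after a linear change of coordinates in the target, f takes the form f = (f̄, h) with f̄ : (ℂⁿ,0) → (ℂⁿ,0) finite and h belonging to the ideal of O_n generated by the coordinate functions of f̄. -/
open Filter Topology Set

noncomputable section

/-- `ℂⁿ` with its Euclidean (Hermitian) norm. -/
abbrev Cn (n : ℕ) : Type := EuclideanSpace ℂ (Fin n)

instance germAlgebra {α : Type*} (l : Filter α) : Algebra ℂ (Filter.Germ l ℂ) :=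
  Algebra.ofModule
    (fun r x y => by
      induction x using Filter.Germ.inductionOn with | _ f =>
      induction y using Filter.Germ.inductionOn with | _ g =>
      rw [← Filter.Germ.coe_smul, ← Filter.Germ.coe_mul, ← Filter.Germ.coe_mul,
        ← Filter.Germ.coe_smul, smul_mul_assoc])
    (fun r x y => by
      induction x using Filter.Germ.inductionOn with | _ f =>
      induction y using Filter.Germ.inductionOn with | _ g =>
      rw [← Filter.Germ.coe_smul, ← Filter.Germ.coe_mul, ← Filter.Germ.coe_mul,
        ← Filter.Germ.coe_smul, mul_smul_comm])

/-- The local ℂ-algebra `𝒪_n` of germs at `0` of holomorphic functions on `ℂⁿ`. -/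
def Ogerm (n : ℕ) : Subalgebra ℂ (Filter.Germ (𝓝 (0 : Cn n)) ℂ) where
  carrier := {G | ∃ g : Cn n → ℂ, AnalyticAt ℂ g 0 ∧ (g : Filter.Germ (𝓝 (0 : Cn n)) ℂ) = G}
  mul_mem' := by rintro _ _ ⟨g, hg, rfl⟩ ⟨h, hh, rfl⟩; exact ⟨g * h, hg.mul hh, rfl⟩
  add_mem' := by rintro _ _ ⟨g, hg, rfl⟩ ⟨h, hh, rfl⟩; exact ⟨g + h, hg.add hh, rfl⟩
  algebraMap_mem' := fun c => ⟨fun _ => c, analyticAt_const, by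
    rw [Algebra.algebraMap_eq_smul_one, ← Filter.Germ.coe_one, ← Filter.Germ.coe_smul]
    congr 1
    funext x
    simp⟩

/-- The ideal `⟨f⟩` of `𝒪_n` generated by the coordinate functions of `f`. -/
def coordIdeal {n p : ℕ} (f : Cn n → Cn p) : Ideal (Ogerm n) :=
  Ideal.span {G : Ogerm n | ∃ i : Fin p,
    (G : Filter.Germ (𝓝 (0 : Cn n)) ℂ) =
      ((fun x => f x i : Cn n → ℂ) : Filter.Germ (𝓝 (0 : Cn n)) ℂ)}

/-- The multiplicity `mult f = dim_ℂ 𝒪ₙ/⟨f⟩` of a map germ. -/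
def multGerm {n p : ℕ} (f : Cn n → Cn p) : Cardinal :=
  Module.rank ℂ (Ogerm n ⧸ coordIdeal f)

/-- `f` is a finite map germ: `dim_ℂ 𝒪ₙ/f^*(𝔪_p)𝒪ₙ < ∞`. -/
def FiniteGerm {n p : ℕ} (f : Cn n → Cn p) : Prop :=
  multGerm f < Cardinal.aleph0

/-- The generic degree `gd(f)`: the minimum of `dim_ℂ 𝒪ₙ/⟨π ∘ f⟩` over all surjective
linear projections `π : ℂⁿ⁺¹ → ℂⁿ`. -/
def gdGerm {n : ℕ} (f : Cn n → Cn (n+1)) : Cardinal :=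
  sInf {c : Cardinal | ∃ π : Cn (n+1) →ₗ[ℂ] Cn n, Function.Surjective π ∧
    c = multGerm (fun x => π (f x))}

set_option maxHeartbeats 1000000
set_option synthInstance.maxHeartbeats 1000000

namespace MultGdAux

variable {n p q : ℕ}

lemma coord_analytic {f : Cn n → Cn p} (hfa : AnalyticAt ℂ f 0) (j : Fin p) :
    AnalyticAt ℂ (fun x => f x j) 0 :=
  ((EuclideanSpace.proj j : Cn p →L[ℂ] ℂ).analyticAt _).comp hfa

/-- The `j`-th coordinate function of `f` as an element of `𝒪ₙ`. -/
def coordElem (f : Cn n → Cn p) (hfa : AnalyticAt ℂ f 0) (j : Fin p) : Ogerm n :=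
  ⟨((fun x => f x j : Cn n → ℂ) : Filter.Germ (𝓝 (0 : Cn n)) ℂ),
    ⟨fun x => f x j, coord_analytic hfa j, rfl⟩⟩

lemma coordElem_mem (f : Cn n → Cn p) (hfa : AnalyticAt ℂ f 0) (j : Fin p) :
    coordElem f hfa j ∈ coordIdeal f :=
  Ideal.subset_span ⟨j, rfl⟩

lemma apply_eq_sum (φ : Cn p →ₗ[ℂ] ℂ) (v : Cn p) :
    φ v = ∑ j, v j * φ (EuclideanSpace.single j (1:ℂ)) := by
  conv_lhs => rw [← (EuclideanSpace.basisFun (Fin p) ℂ).sum_repr v]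
  rw [map_sum]
  simp [EuclideanSpace.basisFun_apply, EuclideanSpace.basisFun_repr, smul_eq_mul]

lemma apply_coord_eq_sum (π : Cn p →ₗ[ℂ] Cn q) (v : Cn p) (i : Fin q) :
    π v i = ∑ j, π (EuclideanSpace.single j (1:ℂ)) i * v j := by
  have h := apply_eq_sum ((EuclideanSpace.projₗ i).comp π) v
  simp only [LinearMap.comp_apply, PiLp.projₗ_apply] at h
  rw [h]
  exact Finset.sum_congr rfl fun j _ => mul_comm _ _

lemma germ_sum_smul (c : Fin p → ℂ) (g : Fin p → (Cn n → ℂ)) :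
    ((fun x => ∑ j, c j * g j x : Cn n → ℂ) : Filter.Germ (𝓝 (0:Cn n)) ℂ)
      = ∑ j, c j • ((g j : Cn n → ℂ) : Filter.Germ (𝓝 (0:Cn n)) ℂ) := by
  have h1 : (fun x => ∑ j, c j * g j x) = ∑ j : Fin p, c j • g j := by
    funext x
    rw [Finset.sum_apply]
    exact Finset.sum_congr rfl fun j _ => rfl
  rw [h1]
  rw [show ((↑(∑ j : Fin p, c j • g j) : Filter.Germ (𝓝 (0:Cn n)) ℂ))
      = Filter.Germ.coeAddHom (𝓝 (0:Cn n)) (∑ j : Fin p, c j • g j) from rfl,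
    map_sum]
  exact Finset.sum_congr rfl fun j _ => Filter.Germ.coe_smul (c j) (g j)

lemma coordIdeal_comp_le (f : Cn n → Cn p) (hfa : AnalyticAt ℂ f 0)
    (π : Cn p →ₗ[ℂ] Cn q) :
    coordIdeal (fun x => π (f x)) ≤ coordIdeal f := by
  rw [coordIdeal, Ideal.span_le]
  rintro G ⟨i, hG⟩
  have hGeq : G = ∑ j, (π (EuclideanSpace.single j (1:ℂ)) i) • coordElem f hfa j := by
    apply Subtype.ext
    rw [hG]
    rw [AddSubmonoidClass.coe_finset_sum]
    have : ∀ j : Fin p, ((π (EuclideanSpace.single j (1:ℂ)) i • coordElem f hfa j : Ogerm n)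
        : Filter.Germ (𝓝 (0:Cn n)) ℂ)
        = π (EuclideanSpace.single j (1:ℂ)) i • ((fun x => f x j : Cn n → ℂ)
          : Filter.Germ (𝓝 (0:Cn n)) ℂ) := fun j => rfl
    simp only [this]
    rw [← germ_sum_smul]
    congr 1
    funext x
    exact apply_coord_eq_sum π (f x) i
  rw [hGeq]
  exact Ideal.sum_mem _ fun j _ =>
    Submodule.smul_of_tower_mem _ _ (coordElem_mem f hfa j)

lemma multGerm_congr {f : Cn n → Cn p} {g : Cn n → Cn q}
    (h : coordIdeal f = coordIdeal g) : multGerm f = multGerm g :=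
  congrArg (fun I : Ideal (Ogerm n) => Module.rank ℂ ((Ogerm n) ⧸ I)) h

/-- The quotient map between the two quotients, as a `ℂ`-linear map. -/
def quotMap {n : ℕ} (I J : Ideal (Ogerm n)) (h : I ≤ J) :
    ((Ogerm n) ⧸ I) →ₗ[ℂ] ((Ogerm n) ⧸ J) where
  toFun := Submodule.mapQ I J LinearMap.id h
  map_add' := map_add _
  map_smul' c x := by
    obtain ⟨y, rfl⟩ := Submodule.Quotient.mk_surjective I x
    show Submodule.mapQ I J LinearMap.id h (c • Submodule.Quotient.mk y)
        = c • Submodule.mapQ I J LinearMap.id h (Submodule.Quotient.mk y)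
    rw [← Submodule.Quotient.mk_smul, Submodule.mapQ_apply, Submodule.mapQ_apply,
      LinearMap.id_apply, LinearMap.id_apply, Submodule.Quotient.mk_smul]

lemma quotMap_mk {n : ℕ} (I J : Ideal (Ogerm n)) (h : I ≤ J) (x : Ogerm n) :
    quotMap I J h (Submodule.Quotient.mk x) = Submodule.Quotient.mk x := by
  show Submodule.mapQ I J LinearMap.id h (Submodule.Quotient.mk x) = _
  rw [Submodule.mapQ_apply, LinearMap.id_apply]

lemma quotMap_surjective {n : ℕ} (I J : Ideal (Ogerm n)) (h : I ≤ J) :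
    Function.Surjective (quotMap I J h) := by
  intro y
  obtain ⟨x, rfl⟩ := Submodule.Quotient.mk_surjective J y
  exact ⟨Submodule.Quotient.mk x, quotMap_mk I J h x⟩

lemma multGerm_le {f : Cn n → Cn p} {g : Cn n → Cn q}
    (h : coordIdeal g ≤ coordIdeal f) : multGerm f ≤ multGerm g := by
  unfold multGerm
  exact LinearMap.rank_le_of_surjective _ (quotMap_surjective _ _ h)

lemma coordIdeal_le_of_mult_eq {f : Cn n → Cn p} {g : Cn n → Cn q}
    (h : coordIdeal g ≤ coordIdeal f) (hm : multGerm f = multGerm g)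
    (hfin : multGerm f < Cardinal.aleph0) :
    coordIdeal f ≤ coordIdeal g := by
  have hsurj := quotMap_surjective _ _ h
  have hr := LinearMap.rank_eq_of_surjective hsurj
  have hr' : multGerm g = multGerm f
      + Module.rank ℂ (LinearMap.ker (quotMap (coordIdeal g) (coordIdeal f) h)) := by
    unfold multGerm; exact hr
  have hker : Module.rank ℂ (LinearMap.ker (quotMap (coordIdeal g) (coordIdeal f) h)) = 0 := by
    have h0 : multGerm f + 0 = multGerm f
        + Module.rank ℂ (LinearMap.ker (quotMap (coordIdeal g) (coordIdeal f) h)) :=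
      calc multGerm f + 0 = multGerm g := by rw [add_zero, hm]
        _ = _ := hr'
    exact (Cardinal.eq_of_add_eq_add_left h0 hfin).symm
  haveI : Subsingleton (LinearMap.ker (quotMap (coordIdeal g) (coordIdeal f) h)) :=
    rank_zero_iff.mp hker
  have hbot : LinearMap.ker (quotMap (coordIdeal g) (coordIdeal f) h) = ⊥ :=
    Submodule.eq_bot_of_subsingleton
  intro x hx
  have hx0 : quotMap (coordIdeal g) (coordIdeal f) h (Submodule.Quotient.mk x) = 0 := by
    rw [quotMap_mk, Submodule.Quotient.mk_eq_zero]
    exact hx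
  have : Submodule.Quotient.mk (p := coordIdeal g) x ∈
      LinearMap.ker (quotMap (coordIdeal g) (coordIdeal f) h) := hx0
  rw [hbot, Submodule.mem_bot] at this
  rwa [Submodule.Quotient.mk_eq_zero] at this

/-- The projection onto the first `n` coordinates. -/
def projL (n : ℕ) : Cn (n+1) →ₗ[ℂ] Cn n where
  toFun v := WithLp.toLp 2 (fun i => v i.castSucc : Fin n → ℂ)
  map_add' a b := rfl
  map_smul' c a := rfl

lemma projL_surjective (n : ℕ) : Function.Surjective (projL n) := by
  intro w
  refine ⟨WithLp.toLp 2 (Fin.snoc w.ofLp 0 : Fin (n+1) → ℂ), ?_⟩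
  ext i
  show (Fin.snoc w.ofLp 0 : Fin (n+1) → ℂ) i.castSucc = w.ofLp i
  simp

end MultGdAux

namespace MultGdAux

variable {n : ℕ}

/-- The endomorphism `v ↦ (π v, v k)` of `ℂⁿ⁺¹`. -/
def Tlin (π : Cn (n+1) →ₗ[ℂ] Cn n) (k : Fin (n+1)) : Cn (n+1) →ₗ[ℂ] Cn (n+1) where
  toFun v := WithLp.toLp 2 (fun j => Fin.lastCases (motive := fun _ => ℂ) (v k) (fun i => π v i) j : Fin (n+1) → ℂ)
  map_add' a b := by
    ext j
    show Fin.lastCases (motive := fun _ => ℂ) ((a + b) k) (fun i => π (a + b) i) j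
      = Fin.lastCases (motive := fun _ => ℂ) (a k) (fun i => π a i) j + Fin.lastCases (motive := fun _ => ℂ) (b k) (fun i => π b i) j
    induction j using Fin.lastCases with
    | last => simp [PiLp.add_apply]
    | cast i => simp [PiLp.add_apply]
  map_smul' c a := by
    ext j
    show Fin.lastCases (motive := fun _ => ℂ) ((c • a) k) (fun i => π (c • a) i) j
      = c • Fin.lastCases (motive := fun _ => ℂ) (a k) (fun i => π a i) j
    induction j using Fin.lastCases with
    | last => simp [PiLp.smul_apply]
    | cast i => simp [PiLp.smul_apply]

lemma Tlin_apply_castSucc (π : Cn (n+1) →ₗ[ℂ] Cn n) (k : Fin (n+1)) (v : Cn (n+1))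
    (i : Fin n) : Tlin π k v i.castSucc = π v i := by
  show (Fin.lastCases (motive := fun _ => ℂ) (v k) (fun i => π v i) i.castSucc : ℂ) = π v i
  simp

lemma Tlin_apply_last (π : Cn (n+1) →ₗ[ℂ] Cn n) (k : Fin (n+1)) (v : Cn (n+1)) :
    Tlin π k v (Fin.last n) = v k := by
  show (Fin.lastCases (motive := fun _ => ℂ) (v k) (fun i => π v i) (Fin.last n) : ℂ) = v k
  simp

lemma exists_T (π : Cn (n+1) →ₗ[ℂ] Cn n) (hπ : Function.Surjective π) :
    ∃ (T : Cn (n+1) ≃ₗ[ℂ] Cn (n+1)) (k : Fin (n+1)),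
      (∀ v i, T v (Fin.castSucc i) = π v i) ∧ (∀ v, T v (Fin.last n) = v k) := by
  -- the kernel of π is one-dimensional
  have hrank : Module.finrank ℂ (LinearMap.ker π) = 1 := by
    have h1 := π.finrank_range_add_finrank_ker
    rw [LinearMap.range_eq_top.2 hπ, finrank_top, finrank_euclideanSpace_fin,
      finrank_euclideanSpace_fin] at h1
    omega
  obtain ⟨u, hu0, hu⟩ := finrank_eq_one_iff'.mp hrank
  have huv : (u : Cn (n+1)) ≠ 0 := fun h => hu0 (Subtype.ext h)
  obtain ⟨k, hk⟩ : ∃ k, (u : Cn (n+1)) k ≠ 0 := by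
    by_contra h
    push_neg at h
    exact huv (PiLp.ext h)
  have hinj : Function.Injective (Tlin π k) := by
    intro a b hab
    have hdiff : Tlin π k (a - b) = 0 := by rw [map_sub, hab, sub_self]
    set v := a - b with hv
    have hπv : π v = 0 := by
      ext i
      have := congrFun (congrArg WithLp.ofLp hdiff) i.castSucc
      rw [Tlin_apply_castSucc] at this
      exact this
    have hvk : v k = 0 := by
      have := congrFun (congrArg WithLp.ofLp hdiff) (Fin.last n)
      rw [Tlin_apply_last] at this
      exact this
    obtain ⟨c, hc⟩ := hu ⟨v, LinearMap.mem_ker.2 hπv⟩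
    have hcv : c • (u : Cn (n+1)) = v := congrArg Subtype.val hc
    have hck : c * (u : Cn (n+1)) k = 0 := by
      rw [← hvk, ← hcv]; rfl
    have hc0 : c = 0 := by
      rcases mul_eq_zero.mp hck with h | h
      · exact h
      · exact absurd h hk
    have : v = 0 := by rw [← hcv, hc0, zero_smul]
    exact sub_eq_zero.mp (hv ▸ this)
  refine ⟨LinearEquiv.ofInjectiveEndo (Tlin π k) hinj, k, ?_, ?_⟩
  · intro v i
    show Tlin π k v i.castSucc = π v i
    exact Tlin_apply_castSucc π k v i
  · intro v
    show Tlin π k v (Fin.last n) = v k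
    exact Tlin_apply_last π k v

end MultGdAux

/-- **Remark (statement 5).** For a finite map germ `f : (ℂⁿ,0) → (ℂⁿ⁺¹,0)`,
`mult f = gd f` iff after a linear change of coordinates in the target `f = (f̄, h)`
with `f̄ : (ℂⁿ,0) → (ℂⁿ,0)` finite and `h ∈ ⟨f̄⟩`. -/
theorem mult_eq_gd_iff_last_coordinate_in_ideal (n : ℕ) (f : Cn n → Cn (n+1))
    (hf0 : f 0 = 0) (hfa : AnalyticAt ℂ f 0) (hfin : FiniteGerm f) :
    multGerm f = gdGerm f ↔
      ∃ T : Cn (n+1) ≃ₗ[ℂ] Cn (n+1),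
        FiniteGerm (fun x : Cn n =>
          (show Cn n from WithLp.toLp 2 (fun i : Fin n => T (f x) i.castSucc))) ∧
        ∃ H : Ogerm n,
          (H : Filter.Germ (𝓝 (0 : Cn n)) ℂ) =
            ((fun x => T (f x) (Fin.last n) : Cn n → ℂ) :
              Filter.Germ (𝓝 (0 : Cn n)) ℂ) ∧
          H ∈ coordIdeal (fun x : Cn n =>
            (show Cn n from WithLp.toLp 2 (fun i : Fin n => T (f x) i.castSucc))) := by
  have hSne : ({c : Cardinal | ∃ π : Cn (n+1) →ₗ[ℂ] Cn n, Function.Surjective π ∧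
      c = multGerm (fun x => π (f x))}).Nonempty :=
    ⟨_, MultGdAux.projL n, MultGdAux.projL_surjective n, rfl⟩
  have hmle : multGerm f ≤ gdGerm f := by
    refine le_csInf hSne ?_
    rintro c ⟨π, hπs, rfl⟩
    exact MultGdAux.multGerm_le (MultGdAux.coordIdeal_comp_le f hfa π)
  constructor
  · intro heq
    obtain ⟨π, hπs, hval⟩ := csInf_mem hSne
    have hm : multGerm f = multGerm (fun x => π (f x)) := heq.trans hval
    have hle := MultGdAux.coordIdeal_comp_le f hfa π
    have hge := MultGdAux.coordIdeal_le_of_mult_eq hle hm hfin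
    have hIJ : coordIdeal f = coordIdeal (fun x => π (f x)) := le_antisymm hge hle
    obtain ⟨T, k, hTc, hTl⟩ := MultGdAux.exists_T π hπs
    have hbar : (fun x : Cn n => (show Cn n from WithLp.toLp 2 (fun i : Fin n => T (f x) i.castSucc)))
        = fun x => π (f x) := by
      funext x
      ext i
      exact hTc (f x) i
    refine ⟨T, ?_, MultGdAux.coordElem f hfa k, ?_, ?_⟩
    · show multGerm _ < Cardinal.aleph0
      rw [hbar, ← hm]
      exact hfin
    · exact congrArg (fun g : Cn n → ℂ => (g : Filter.Germ (𝓝 (0 : Cn n)) ℂ))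
        (funext fun x => (hTl (f x)).symm)
    · rw [hbar, ← hIJ]
      exact MultGdAux.coordElem_mem f hfa k
  · rintro ⟨T, hTfin, H, hH, hHmem⟩
    set fb := fun x : Cn n => (show Cn n from WithLp.toLp 2 (fun i : Fin n => T (f x) i.castSucc)) with hfb
    have hπ : Function.Surjective ((MultGdAux.projL n).comp (T : Cn (n+1) →ₗ[ℂ] Cn (n+1))) := by
      intro w
      obtain ⟨v, hv⟩ := MultGdAux.projL_surjective n w
      exact ⟨T.symm v, by simp [LinearMap.comp_apply, hv]⟩
    have hcomp : (fun x => ((MultGdAux.projL n).comp (T : Cn (n+1) →ₗ[ℂ] Cn (n+1))) (f x)) = fb := rfl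
    have hTf : AnalyticAt ℂ (fun x => T (f x)) 0 :=
      (((T : Cn (n+1) →ₗ[ℂ] Cn (n+1)).toContinuousLinearMap).analyticAt (f 0)).comp hfa
    have h1 : coordIdeal fb ≤ coordIdeal f := by
      rw [← hcomp]
      exact MultGdAux.coordIdeal_comp_le f hfa _
    have h2 : coordIdeal f ≤ coordIdeal fb := by
      have hTsymm : (fun x : Cn n =>
          (T.symm : Cn (n+1) →ₗ[ℂ] Cn (n+1)) ((fun y => T (f y)) x)) = f := by
        funext x
        simp
      have h3 : coordIdeal f ≤ coordIdeal (fun x => T (f x)) :=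
        le_trans (le_of_eq (congrArg coordIdeal hTsymm.symm))
          (MultGdAux.coordIdeal_comp_le (fun x => T (f x)) hTf _)
      have h4 : coordIdeal (fun x => T (f x)) ≤ coordIdeal fb := by
        rw [coordIdeal, Ideal.span_le]
        rintro G ⟨j, hG⟩
        induction j using Fin.lastCases with
        | last =>
          have hGH : G = H := Subtype.ext (hG.trans hH.symm)
          rw [hGH]
          exact hHmem
        | cast i =>
          exact Ideal.subset_span ⟨i, hG⟩
      exact le_trans h3 h4
    have hmeq : multGerm f = multGerm fb := MultGdAux.multGerm_congr (le_antisymm h2 h1)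
    refine le_antisymm hmle (csInf_le' ⟨(MultGdAux.projL n).comp (T : Cn (n+1) →ₗ[ℂ] Cn (n+1)), hπ, ?_⟩)
    rw [hcomp]
    exact hmeq
end
end

section
/- Let f : ℂ² → ℂ³ be f(x,y) = (x, y², xy). Then the image of f equals the set {(a,b,c) ∈ ℂ³ : c² = a²b}, and the tangent cone of this set at the origin is the plane {(a,b,c) ∈ ℂ³ : c = 0}. -/
open Filter Topology Set

noncomputable section

/-- The tangent cone of `X` at `x`: all limits `v` of `tₖ • (xₖ - x)` with `xₖ ∈ X`,
`xₖ → x` and `tₖ ∈ ℂ`. -/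
def tangentConeSet {E : Type*} [NormedAddCommGroup E] [NormedSpace ℂ E]
    (X : Set E) (x : E) : Set E :=
  {v | ∃ (xs : ℕ → E) (ts : ℕ → ℂ), (∀ k, xs k ∈ X) ∧
    Filter.Tendsto xs Filter.atTop (𝓝 x) ∧
    Filter.Tendsto (fun k => ts k • (xs k - x)) Filter.atTop (𝓝 v)}

/-- **Example (statement 9).** For `f(x,y) = (x, y², xy)` the image is
`{(a,b,c) : c² = a²b}` and the tangent cone of this set at the origin is `{c = 0}`. -/
theorem image_and_tangent_cone_of_cross_cap :
    Set.range (fun p : Cn 2 => (WithLp.toLp 2 ![p 0, (p 1) ^ 2, p 0 * p 1] : Cn 3)) =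
      {v : Cn 3 | (v 2) ^ 2 = (v 0) ^ 2 * v 1} ∧
    tangentConeSet {v : Cn 3 | (v 2) ^ 2 = (v 0) ^ 2 * v 1} 0 =
      {v : Cn 3 | v 2 = 0} := by
  constructor
  · ext v
    constructor
    · rintro ⟨p, rfl⟩
      show (p 0 * p 1) ^ 2 = (p 0) ^ 2 * (p 1) ^ 2
      ring
    · intro hv
      simp only [Set.mem_setOf_eq] at hv
      by_cases h0 : v 0 = 0
      · -- then v 2 = 0, take p = (0, sqrt (v 1))
        have h2 : v 2 = 0 := by
          have : (v 2) ^ 2 = 0 := by rw [hv, h0]; ring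
          exact pow_eq_zero_iff (by norm_num) |>.1 this
        obtain ⟨s, hs⟩ := IsAlgClosed.exists_pow_nat_eq (v 1) (n := 2) (by norm_num)
        refine ⟨(WithLp.toLp 2 ![0, s] : Cn 2), ?_⟩
        ext i
        fin_cases i
        · simpa using h0.symm
        · simpa using hs
        · simpa [h0] using h2.symm
      · refine ⟨(WithLp.toLp 2 ![v 0, v 2 / v 0] : Cn 2), ?_⟩
        ext i
        fin_cases i <;> simp
        · field_simp
          rw [hv]
        · field_simp
  · ext v
    constructor
    · rintro ⟨xs, ts, hmem, hx0, hlim⟩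
      simp only [Set.mem_setOf_eq]
      have hcomp : ∀ i : Fin 3, Tendsto (fun k => ts k * xs k i) atTop (𝓝 (v i)) := by
        intro i
        have := (tendsto_pi_nhds.1 (((PiLp.continuous_ofLp 2 (fun _ : Fin 3 => ℂ)).tendsto _).comp hlim)) i
        simpa [sub_zero] using this
      have hx1 : Tendsto (fun k => xs k 1) atTop (𝓝 0) := by
        have := (tendsto_pi_nhds.1 (((PiLp.continuous_ofLp 2 (fun _ : Fin 3 => ℂ)).tendsto _).comp hx0)) 1
        simpa using this
      have key : Tendsto (fun k => (ts k * xs k 2) ^ 2) atTop (𝓝 ((v 2) ^ 2)) :=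
        (hcomp 2).pow 2
      have key2 : Tendsto (fun k => (ts k * xs k 2) ^ 2) atTop (𝓝 0) := by
        have heq : (fun k => (ts k * xs k 2) ^ 2)
            = fun k => (ts k * xs k 0) ^ 2 * xs k 1 := by
          funext k
          have := hmem k
          simp only [Set.mem_setOf_eq] at this
          rw [mul_pow, mul_pow, this]
          ring
        rw [heq]
        simpa using ((hcomp 0).pow 2).mul hx1
      have : (v 2) ^ 2 = 0 := tendsto_nhds_unique key key2
      exact pow_eq_zero_iff (by norm_num) |>.1 this
    · intro hv
      simp only [Set.mem_setOf_eq] at hv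
      obtain ⟨s, hs⟩ := IsAlgClosed.exists_pow_nat_eq (v 1) (n := 2) (by norm_num)
      set a := v 0 with ha
      have hne : ∀ k : ℕ, ((k:ℂ)+1) ≠ 0 := by
        intro k
        have : ((k:ℂ)+1) = ((k+1 : ℕ) : ℂ) := by push_cast; ring
        rw [this]
        exact_mod_cast Nat.succ_ne_zero k
      have hkr : Tendsto (fun k : ℕ => (((k:ℝ)+1))⁻¹) atTop (𝓝 0) :=
        tendsto_inv_atTop_zero.comp
          (tendsto_atTop_add_const_right _ 1 tendsto_natCast_atTop_atTop)
      have hk : Tendsto (fun k : ℕ => (((k:ℂ)+1))⁻¹) atTop (𝓝 0) := by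
        have h2 := (Complex.continuous_ofReal.tendsto 0).comp hkr
        refine h2.congr fun k => ?_
        simp only [Function.comp_apply, Complex.ofReal_inv]
        push_cast
        ring
      have hgen : ∀ (c : ℂ) (m : ℕ), 0 < m →
          Tendsto (fun k : ℕ => c / ((k:ℂ)+1)^m) atTop (𝓝 0) := by
        intro c m hm
        have : Tendsto (fun k : ℕ => c * (((k:ℂ)+1)⁻¹)^m) atTop (𝓝 (c * 0^m)) :=
          (tendsto_const_nhds.mul (hk.pow m))
        simp only [zero_pow hm.ne', mul_zero] at this
        refine this.congr fun k => ?_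
        rw [div_eq_mul_inv, inv_pow]
      refine ⟨fun k => (WithLp.toLp 2 ![a / (k+1)^2, v 1 / (k+1)^2, a * s / (k+1)^3] : Cn 3),
        fun k => ((k:ℂ)+1)^2, ?_, ?_, ?_⟩
      · intro k
        simp only [Set.mem_setOf_eq]
        simp only [Matrix.cons_val_zero, Matrix.cons_val_one, Matrix.head_cons,
          Matrix.cons_val_two, Matrix.tail_cons]
        have hk0 := hne k
        field_simp
        rw [← hs]
      · refine ((PiLp.continuous_toLp 2 (fun _ : Fin 3 => ℂ)).tendsto (WithLp.ofLp (0 : Cn 3))).comp (tendsto_pi_nhds.2 ?_)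
        intro i
        fin_cases i
        · simpa using hgen a 2 two_pos
        · simpa using hgen (v 1) 2 two_pos
        · simpa using hgen (a * s) 3 three_pos
      · have hvec : (fun k : ℕ => (((k:ℂ)+1)^2 : ℂ) •
            ((WithLp.toLp 2 ![a / (k+1)^2, v 1 / (k+1)^2, a * s / (k+1)^3] : Cn 3) - 0))
            = fun k : ℕ => (WithLp.toLp 2 ![a, v 1, a * s / ((k:ℂ)+1)] : Cn 3) := by
          funext k
          ext i
          have hk0 := hne k
          fin_cases i
          · show (((k:ℂ)+1)^2) * (a / ((k:ℂ)+1)^2 - 0) = a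
            field_simp
            ring
          · show (((k:ℂ)+1)^2) * (v 1 / ((k:ℂ)+1)^2 - 0) = v 1
            field_simp
            ring
          · show (((k:ℂ)+1)^2) * (a * s / ((k:ℂ)+1)^3 - 0) = a * s / ((k:ℂ)+1)
            field_simp
            ring
        rw [hvec]
        refine ((PiLp.continuous_toLp 2 (fun _ : Fin 3 => ℂ)).tendsto (WithLp.ofLp v)).comp (tendsto_pi_nhds.2 ?_)
        intro i
        fin_cases i
        · simp only [Matrix.cons_val_zero]; exact tendsto_const_nhds
        · simp only [Matrix.cons_val_one, Matrix.head_cons]; exact tendsto_const_nhds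
        · simpa [hv] using hgen (a * s) 1 one_pos
end
end
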